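/- Let t ≥ 1 and ε > 0. There exists B ≥ 1, depending only on t and ε, such that: for all σ > 0 and τ > 0 with σ^t ≤ τ, and all θ ∈ ℝ with |θ|^t ≥ B τ, if X ~ N(θ, σ²) and ζ = 1{|X|^t ≥ τ}, then E[|X|^{2t} ζ] − ( E[|X|^t ζ] )² ≤ ε |θ|^{2t}. -/

import Mathlib

set_option maxHeartbeats 1000000

open MeasureTheory ProbabilityTheory Real

lemma rpow_two_mul_eq {a : ℝ} (ha : 0 ≤ a) {t : ℝ} (ht : 0 < t) :
    a ^ (2 * t) = (a ^ t) ^ 2 := by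
  rcases eq_or_lt_of_le ha with h | h
  · rw [← h, Real.zero_rpow (by positivity), Real.zero_rpow (ne_of_gt ht)]
    ring
  · rw [sq, ← Real.rpow_add h, two_mul]

lemma rpow_sub_rpow_le {t a b : ℝ} (ht : 1 ≤ t) (hb : 0 ≤ b) (hba : b ≤ a) :
    a ^ t - b ^ t ≤ t * a ^ (t - 1) * (a - b) := by
  have ha : 0 ≤ a := hb.trans hba
  rcases eq_or_lt_of_le ha with h | h
  · have hb0 : b = 0 := le_antisymm (by rw [← h] at hba; exact hba) hb
    rw [← h, hb0, Real.zero_rpow (by linarith : t ≠ 0)]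
    simp
  · have hs : (-1 : ℝ) ≤ b / a - 1 := by
      have : 0 ≤ b / a := div_nonneg hb h.le
      linarith
    have hber := one_add_mul_self_le_rpow_one_add hs ht
    have h1 : (1 : ℝ) + (b / a - 1) = b / a := by ring
    rw [h1, Real.div_rpow hb h.le] at hber
    have hA : 0 < a ^ t := Real.rpow_pos_of_pos h t
    have hA1 : a ^ (t - 1) = a ^ t / a := by
      rw [Real.rpow_sub h, Real.rpow_one]
    have ha' : a ≠ 0 := ne_of_gt h
    have hber2 : (1 + t * (b / a - 1)) * a ^ t ≤ b ^ t := (le_div_iff₀ hA).mp hber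
    have h4 := mul_le_mul_of_nonneg_right hber2 h.le
    rw [show (1 + t * (b / a - 1)) * a ^ t * a = a ^ t * a + t * (b - a) * a ^ t by
      field_simp] at h4
    rw [hA1, show t * (a ^ t / a) * (a - b) = t * a ^ t * (a - b) / a by ring,
      le_div_iff₀ h]
    nlinarith [h4]

lemma abs_rpow_sub_rpow_le {t a b : ℝ} (ht : 1 ≤ t) (ha : 0 ≤ a) (hb : 0 ≤ b) :
    |a ^ t - b ^ t| ≤ t * (max a b) ^ (t - 1) * |a - b| := by
  rcases le_total b a with h | h
  · rw [abs_of_nonneg (sub_nonneg.2 (Real.rpow_le_rpow hb h (by linarith))),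
      abs_of_nonneg (sub_nonneg.2 h), max_eq_left h]
    exact rpow_sub_rpow_le ht hb h
  · rw [abs_sub_comm, abs_sub_comm a b,
      abs_of_nonneg (sub_nonneg.2 (Real.rpow_le_rpow ha h (by linarith))),
      abs_of_nonneg (sub_nonneg.2 h), max_eq_right h]
    exact rpow_sub_rpow_le ht ha h

lemma integrable_one_add_abs_rpow (p : ℝ) (hp : 0 ≤ p) :
    Integrable (fun z : ℝ => (1 + |z|) ^ p) (gaussianReal 0 1) := by
  rw [gaussianReal_of_var_ne_zero 0 one_ne_zero,
    integrable_withDensity_iff (measurable_gaussianPDF 0 1)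
      (ae_of_all _ fun x => ENNReal.ofReal_lt_top)]
  refine Integrable.mono' (g := fun x : ℝ =>
      ((Real.sqrt (2 * π))⁻¹ * Real.exp (p ^ 2)) * Real.exp (-(1/4) * x ^ 2)) ?_ ?_ ?_
  · exact (integrable_exp_neg_mul_sq (by norm_num)).const_mul _
  · exact ((((continuous_const.add continuous_abs).rpow_const
      (fun x => Or.inr hp)).measurable).mul
      (measurable_gaussianPDF 0 1).ennreal_toReal).aestronglyMeasurable
  · refine ae_of_all _ fun x => ?_
    have hpdf : (gaussianPDF 0 1 x).toReal = gaussianPDFReal 0 1 x :=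
      ENNReal.toReal_ofReal (gaussianPDFReal_nonneg 0 1 x)
    have hpdf2 : gaussianPDFReal 0 1 x
        = (Real.sqrt (2 * π))⁻¹ * Real.exp (-(x ^ 2 / 2)) := by
      rw [gaussianPDFReal_def]
      norm_num
      exact Or.inl (by ring)
    have h1 : (1 + |x|) ^ p ≤ Real.exp (|x| * p) := by
      calc (1 + |x|) ^ p ≤ (Real.exp |x|) ^ p :=
            Real.rpow_le_rpow (by positivity) (by linarith [Real.add_one_le_exp |x|]) hp
        _ = Real.exp (|x| * p) := (Real.exp_mul |x| p).symm
    have h2 : Real.exp (|x| * p) * Real.exp (-(x ^ 2 / 2))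
        ≤ Real.exp (p ^ 2) * Real.exp (-(1/4) * x ^ 2) := by
      rw [← Real.exp_add, ← Real.exp_add]
      apply Real.exp_le_exp.2
      nlinarith [sq_nonneg (|x| - 2 * p), sq_abs x]
    rw [Real.norm_eq_abs,
      abs_of_nonneg (by positivity : 0 ≤ (1 + |x|) ^ p * (gaussianPDF 0 1 x).toReal),
      hpdf, hpdf2]
    calc (1 + |x|) ^ p * ((Real.sqrt (2 * π))⁻¹ * Real.exp (-(x ^ 2 / 2)))
        ≤ Real.exp (|x| * p) * ((Real.sqrt (2 * π))⁻¹ * Real.exp (-(x ^ 2 / 2))) :=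
          mul_le_mul_of_nonneg_right h1 (by positivity)
      _ = (Real.sqrt (2 * π))⁻¹ * (Real.exp (|x| * p) * Real.exp (-(x ^ 2 / 2))) := by ring
      _ ≤ (Real.sqrt (2 * π))⁻¹ * (Real.exp (p ^ 2) * Real.exp (-(1/4) * x ^ 2)) :=
          mul_le_mul_of_nonneg_left h2 (by positivity)
      _ = (Real.sqrt (2 * π))⁻¹ * Real.exp (p ^ 2) * Real.exp (-(1/4) * x ^ 2) := by ring

lemma gaussianReal_eq_map (σ θ : ℝ) :
    gaussianReal θ (σ ^ 2).toNNReal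
      = (gaussianReal 0 1).map (fun z => σ * z + θ) := by
  have hnn : ((⟨σ ^ 2, sq_nonneg σ⟩ : NNReal) * 1) = (σ ^ 2).toNNReal := by
    ext
    simp [Real.coe_toNNReal _ (sq_nonneg σ)]
  have hm : Measurable fun z : ℝ => σ * z := by fun_prop
  have h1 : (gaussianReal 0 1).map (fun z => σ * z) = gaussianReal 0 (σ ^ 2).toNNReal := by
    have h := gaussianReal_map_const_mul (μ := 0) (v := 1) σ
    rw [mul_zero] at h
    rw [h]
    congr 1
  have h2 : (gaussianReal 0 (σ ^ 2).toNNReal).map (· + θ) = gaussianReal θ (σ ^ 2).toNNReal := by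
    simpa using gaussianReal_map_add_const (μ := 0) (v := (σ ^ 2).toNNReal) θ
  rw [← h2, ← h1, Measure.map_map (measurable_add_const θ) hm]
  rfl

theorem truncated_second_moment_gap (t ε : ℝ) (ht : 1 ≤ t) (hε : 0 < ε) :
    ∃ B ≥ (1 : ℝ), ∀ σ τ θ : ℝ, 0 < σ → 0 < τ → σ ^ t ≤ τ → B * τ ≤ |θ| ^ t →
      (∫ x in {x : ℝ | τ ≤ |x| ^ t}, |x| ^ (2 * t)
          ∂(gaussianReal θ (σ ^ 2).toNNReal)) -
        (∫ x in {x : ℝ | τ ≤ |x| ^ t}, |x| ^ t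
          ∂(gaussianReal θ (σ ^ 2).toNNReal)) ^ 2
        ≤ ε * |θ| ^ (2 * t) := by
  have ht0 : 0 < t := lt_of_lt_of_le one_pos ht
  set γ := gaussianReal 0 1 with hγ
  set K : ℝ := ∫ z, (1 + |z|) ^ (2 * t) ∂γ with hKdef
  have hKint : Integrable (fun z : ℝ => (1 + |z|) ^ (2 * t)) γ :=
    integrable_one_add_abs_rpow (2 * t) (by linarith)
  have hK0 : 0 ≤ K := integral_nonneg fun z => Real.rpow_nonneg (by positivity) _
  set C : ℝ := max K 1 with hCdef
  have hC1 : (1 : ℝ) ≤ C := le_max_right _ _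
  have hKC : K ≤ C := le_max_left _ _
  have hC0 : 0 < C := lt_of_lt_of_le one_pos hC1
  set β : ℝ := min (1/2) (Real.sqrt (ε / (2 * (4 + t ^ 2) * C))) with hβdef
  have hβpos : 0 < β := lt_min (by norm_num) (Real.sqrt_pos.2 (by positivity))
  have hβhalf : β ≤ 1/2 := min_le_left _ _
  have hβsq : β ^ 2 * ((4 + t ^ 2) * C) ≤ ε / 2 := by
    have h1 : β ≤ Real.sqrt (ε / (2 * (4 + t ^ 2) * C)) := min_le_right _ _
    have h2 : β ^ 2 ≤ ε / (2 * (4 + t ^ 2) * C) := by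
      rw [← Real.sq_sqrt (by positivity : 0 ≤ ε / (2 * (4 + t ^ 2) * C))]
      exact pow_le_pow_left₀ hβpos.le h1 2
    calc β ^ 2 * ((4 + t ^ 2) * C)
        ≤ (ε / (2 * (4 + t ^ 2) * C)) * ((4 + t ^ 2) * C) :=
          mul_le_mul_of_nonneg_right h2 (by positivity)
      _ = ε / 2 := by field_simp
  refine ⟨β⁻¹ ^ t, ?_, ?_⟩
  · calc (1 : ℝ) = 1 ^ t := (Real.one_rpow t).symm
      _ ≤ β⁻¹ ^ t := Real.rpow_le_rpow zero_le_one
          (by rw [le_inv_comm₀ one_pos hβpos]; linarith) (by linarith)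
  intro σ τ θ hσ hτ hστ hBτ
  set μ := gaussianReal θ (σ ^ 2).toNNReal with hμdef
  have hθt : 0 < |θ| ^ t :=
    lt_of_lt_of_le (by positivity : (0:ℝ) < β⁻¹ ^ t * τ) hBτ
  have hθ : 0 < |θ| := by
    rcases eq_or_lt_of_le (abs_nonneg θ) with h | h
    · rw [← h, Real.zero_rpow (ne_of_gt ht0)] at hθt
      exact absurd hθt (lt_irrefl 0)
    · exact h
  set m : ℝ := |θ| ^ t with hmdef
  have hm0 : 0 < m := hθt
  have hτβ : τ ≤ (β * |θ|) ^ t := by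
    have hmul : β ^ t * β⁻¹ ^ t = 1 := by
      rw [← Real.mul_rpow hβpos.le (inv_nonneg.2 hβpos.le),
        mul_inv_cancel₀ (ne_of_gt hβpos), Real.one_rpow]
    have h := mul_le_mul_of_nonneg_left hBτ (Real.rpow_nonneg hβpos.le t)
    rw [← mul_assoc, hmul, one_mul] at h
    rw [Real.mul_rpow hβpos.le (abs_nonneg θ)]
    exact h
  have hσβ : σ ≤ β * |θ| := by
    rw [← Real.rpow_le_rpow_iff hσ.le (by positivity) ht0]
    exact hστ.trans hτβ
  have hσθ : σ ≤ |θ| :=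
    hσβ.trans (by nlinarith)
  -- the comparison function
  set u : ℝ → ℝ := fun x => |x - θ| / σ with hudef
  set D : ℝ → ℝ := fun x => (1 + u x) ^ (2 * t) with hDdef
  have hu0 : ∀ x, 0 ≤ u x := fun x => div_nonneg (abs_nonneg _) hσ.le
  have hσu : ∀ x, σ * u x = |x - θ| := fun x => by
    rw [hudef]; field_simp
  have hmap : μ = γ.map (fun z => σ * z + θ) := gaussianReal_eq_map σ θ
  have hf : Measurable fun z : ℝ => σ * z + θ := by fun_prop
  have hcont : Continuous fun x : ℝ => (1 + |x - θ| / σ) ^ (2 * t) :=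
    (continuous_const.add (((continuous_id.sub continuous_const).abs).div_const σ)).rpow_const
      (fun x => Or.inr (by linarith))
  have hcomp : (fun x : ℝ => (1 + |x - θ| / σ) ^ (2 * t)) ∘ (fun z => σ * z + θ)
      = fun z : ℝ => (1 + |z|) ^ (2 * t) := by
    funext z
    simp only [Function.comp_apply, add_sub_cancel_right, abs_mul, abs_of_pos hσ]
    rw [mul_comm, mul_div_assoc, div_self (ne_of_gt hσ), mul_one]
  have hDint : Integrable D μ := by
    rw [hDdef, hmap]
    have : ∀ x, (1 + u x) ^ (2*t) = (1 + |x - θ| / σ) ^ (2 * t) := fun x => rfl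
    rw [integrable_map_measure hcont.aestronglyMeasurable hf.aemeasurable, hcomp]
    exact hKint
  have hDval : ∫ x, D x ∂μ = K := by
    rw [hDdef, hmap, integral_map hf.aemeasurable hcont.aestronglyMeasurable]
    rw [show (fun z => (1 + u (σ * z + θ)) ^ (2*t)) = fun z : ℝ => (1 + |z|) ^ (2 * t) from hcomp]
  -- pointwise bounds
  have hbase : ∀ x : ℝ, |x| ≤ |θ| * (1 + u x) := by
    intro x
    have h1 : |x| ≤ |θ| + |x - θ| := by
      have := abs_add_le θ (x - θ)
      simpa using this
    have h2 : |x - θ| = σ * u x := (hσu x).symm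
    nlinarith [hu0 x, mul_le_mul_of_nonneg_right hσθ (hu0 x)]
  have hone_u : ∀ x : ℝ, (1:ℝ) ≤ 1 + u x := fun x => by linarith [hu0 x]
  have hut : ∀ x : ℝ, (1 + u x) ^ t ≤ (1 + u x) ^ (2 * t) := fun x =>
    Real.rpow_le_rpow_of_exponent_le (hone_u x) (by linarith)
  have hP1 : ∀ x : ℝ, |x| ^ t ≤ m * D x := by
    intro x
    calc |x| ^ t ≤ (|θ| * (1 + u x)) ^ t :=
          Real.rpow_le_rpow (abs_nonneg x) (hbase x) ht0.le
      _ = m * (1 + u x) ^ t := by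
          rw [Real.mul_rpow (abs_nonneg θ) (by linarith [hu0 x])]
      _ ≤ m * D x := mul_le_mul_of_nonneg_left (hut x) hm0.le
  have hP2 : ∀ x : ℝ, |x| ^ (2 * t) ≤ m ^ 2 * D x := by
    intro x
    calc |x| ^ (2 * t) ≤ (|θ| * (1 + u x)) ^ (2 * t) :=
          Real.rpow_le_rpow (abs_nonneg x) (hbase x) (by linarith)
      _ = |θ| ^ (2 * t) * D x := by
          rw [Real.mul_rpow (abs_nonneg θ) (by linarith [hu0 x])]
      _ = m ^ 2 * D x := by rw [rpow_two_mul_eq (abs_nonneg θ) ht0]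
  have hP3 : ∀ x : ℝ, (|x| ^ t - m) ^ 2 ≤ t ^ 2 * β ^ 2 * m ^ 2 * D x := by
    intro x
    have habs : |(|x| ^ t - m)| ≤ t * β * m * (1 + u x) ^ t := by
      have h1 := abs_rpow_sub_rpow_le ht (abs_nonneg x) (abs_nonneg θ)
      have hmax : max |x| |θ| ≤ |θ| * (1 + u x) :=
        max_le (hbase x) (by nlinarith [hu0 x])
      have hmax' : (max |x| |θ|) ^ (t - 1) ≤ (|θ| * (1 + u x)) ^ (t - 1) :=
        Real.rpow_le_rpow (le_max_of_le_right (abs_nonneg θ)) hmax (by linarith)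
      have hd : |(|x| - |θ|)| ≤ β * |θ| * (1 + u x) := by
        have h2 : |(|x| - |θ|)| ≤ |x - θ| := abs_abs_sub_abs_le_abs_sub x θ
        have h3 : |x - θ| = σ * u x := (hσu x).symm
        have h4 : σ * u x ≤ β * |θ| * u x := mul_le_mul_of_nonneg_right hσβ (hu0 x)
        nlinarith [hu0 x, mul_pos (mul_pos hβpos hθ) (lt_of_lt_of_le one_pos (hone_u x))]
      calc |(|x| ^ t - m)| ≤ t * (max |x| |θ|) ^ (t - 1) * |(|x| - |θ|)| := h1
        _ ≤ t * (|θ| * (1 + u x)) ^ (t - 1) * (β * |θ| * (1 + u x)) := by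
            apply mul_le_mul (mul_le_mul_of_nonneg_left hmax' (by linarith))
              hd (abs_nonneg _) (by positivity)
        _ = t * β * m * (1 + u x) ^ t := by
            have h1u : (0:ℝ) < 1 + u x := lt_of_lt_of_le one_pos (hone_u x)
            have e1 : |θ| ^ (t - 1) = |θ| ^ t / |θ| := by
              rw [Real.rpow_sub hθ, Real.rpow_one]
            have e2 : (1 + u x) ^ (t - 1) = (1 + u x) ^ t / (1 + u x) := by
              rw [Real.rpow_sub h1u, Real.rpow_one]
            rw [Real.mul_rpow (abs_nonneg θ) (by linarith [hu0 x]), e1, e2, hmdef]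
            field_simp
    have hsq := mul_self_le_mul_self (abs_nonneg _) habs
    rw [abs_mul_abs_self] at hsq
    calc (|x| ^ t - m) ^ 2 = (|x| ^ t - m) * (|x| ^ t - m) := by ring
      _ ≤ (t * β * m * (1 + u x) ^ t) * (t * β * m * (1 + u x) ^ t) := hsq
      _ = t ^ 2 * β ^ 2 * m ^ 2 * ((1 + u x) ^ t) ^ 2 := by ring
      _ = t ^ 2 * β ^ 2 * m ^ 2 * D x := by
          rw [hDdef, ← rpow_two_mul_eq (by linarith [hu0 x] : (0:ℝ) ≤ 1 + u x) ht0]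
  have hP4 : ∀ x : ℝ, u x ^ 2 ≤ D x := by
    intro x
    have h1 : u x ^ 2 ≤ (1 + u x) ^ (2:ℕ) := by nlinarith [hu0 x]
    calc u x ^ 2 ≤ (1 + u x) ^ (2:ℕ) := h1
      _ = (1 + u x) ^ ((2:ℕ) : ℝ) := (Real.rpow_natCast _ 2).symm
      _ ≤ (1 + u x) ^ (2 * t) := Real.rpow_le_rpow_of_exponent_le (hone_u x)
          (by push_cast; linarith)
  -- integrability
  have hmeas_t : AEStronglyMeasurable (fun x : ℝ => |x| ^ t) μ :=
    (continuous_abs.rpow_const (fun x => Or.inr ht0.le)).aestronglyMeasurable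
  have hmeas_2t : AEStronglyMeasurable (fun x : ℝ => |x| ^ (2 * t)) μ :=
    (continuous_abs.rpow_const (fun x => Or.inr (by linarith))).aestronglyMeasurable
  have hYint : Integrable (fun x : ℝ => |x| ^ t) μ := by
    refine (hDint.const_mul m).mono' hmeas_t (ae_of_all _ fun x => ?_)
    rw [Real.norm_eq_abs, abs_of_nonneg (Real.rpow_nonneg (abs_nonneg x) t)]
    exact hP1 x
  have hY2int : Integrable (fun x : ℝ => |x| ^ (2 * t)) μ := by
    refine (hDint.const_mul (m ^ 2)).mono' hmeas_2t (ae_of_all _ fun x => ?_)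
    rw [Real.norm_eq_abs, abs_of_nonneg (Real.rpow_nonneg (abs_nonneg x) _)]
    exact hP2 x
  have hVint : Integrable (fun x : ℝ => (|x| ^ t - m) ^ 2) μ := by
    refine (hDint.const_mul (t ^ 2 * β ^ 2 * m ^ 2)).mono'
      (((continuous_abs.rpow_const (fun x => Or.inr ht0.le)).sub continuous_const).pow 2).aestronglyMeasurable
      (ae_of_all _ fun x => ?_)
    rw [Real.norm_eq_abs, abs_of_nonneg (sq_nonneg _)]
    exact hP3 x
  set S : Set ℝ := {x : ℝ | τ ≤ |x| ^ t} with hSdef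
  have hS : MeasurableSet S :=
    measurableSet_le measurable_const (continuous_abs.rpow_const (fun x => Or.inr ht0.le)).measurable
  set I2 : ℝ := ∫ x in S, |x| ^ (2 * t) ∂μ with hI2def
  set I1 : ℝ := ∫ x in S, |x| ^ t ∂μ with hI1def
  -- split identity
  have hsplit : ∫ x in S, (|x| ^ t - m) ^ 2 ∂μ
      = I2 - 2 * m * I1 + m ^ 2 * (μ S).toReal := by
    have hfun : ∀ x : ℝ, (|x| ^ t - m) ^ 2 = |x| ^ (2 * t) - 2 * m * |x| ^ t + m ^ 2 :=
      fun x => by rw [rpow_two_mul_eq (abs_nonneg x) ht0]; ring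
    calc ∫ x in S, (|x| ^ t - m) ^ 2 ∂μ
        = ∫ x in S, (|x| ^ (2 * t) - 2 * m * |x| ^ t + m ^ 2) ∂μ :=
          integral_congr_ae (ae_of_all _ fun x => hfun x)
      _ = (∫ x in S, (|x| ^ (2 * t) - 2 * m * |x| ^ t) ∂μ) + ∫ x in S, (m ^ 2 : ℝ) ∂μ := by
          refine integral_add ?_ (integrable_const _)
          exact (hY2int.sub (hYint.const_mul (2 * m))).restrict
      _ = (∫ x in S, |x| ^ (2 * t) ∂μ) - (∫ x in S, 2 * m * |x| ^ t ∂μ)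
            + (μ S).toReal * m ^ 2 := by
          rw [integral_sub hY2int.restrict (hYint.const_mul (2 * m)).restrict,
            setIntegral_const, smul_eq_mul]
          rfl
      _ = I2 - 2 * m * I1 + m ^ 2 * (μ S).toReal := by
          rw [integral_const_mul]; ring
  -- measure of complement
  have hμSc : (μ Sᶜ).toReal ≤ 4 * β ^ 2 * K := by
    have hind : ∀ x : ℝ, Sᶜ.indicator (fun _ => (1:ℝ)) x ≤ 4 * β ^ 2 * D x := by
      intro x
      by_cases hx : x ∈ Sᶜ
      · rw [Set.indicator_of_mem hx]
        have hxS : ¬ τ ≤ |x| ^ t := hx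
        have hxlt : |x| < β * |θ| := by
          by_contra hge
          push_neg at hge
          exact hxS (le_trans hτβ (Real.rpow_le_rpow (by positivity) hge ht0.le))
        have h1 : |θ| / 2 ≤ |x - θ| := by
          have h2 : |θ| - |x| ≤ |x - θ| := by
            have := abs_sub_abs_le_abs_sub θ x
            rwa [abs_sub_comm] at this
          nlinarith
        have h3 : |θ| / 2 ≤ β * |θ| * u x := by
          have h4 : |x - θ| = σ * u x := (hσu x).symm
          have h5 : σ * u x ≤ β * |θ| * u x := mul_le_mul_of_nonneg_right hσβ (hu0 x)
          linarith [h1, h4 ▸ h1]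
        -- 1 ≤ 2 β u x, hence 1 ≤ 4 β² u² ≤ 4 β² D
        have h6 : 1 ≤ 2 * β * u x := by
          have h7 : |θ| * 1 ≤ |θ| * (2 * β * u x) := by
            calc |θ| * 1 = 2 * (|θ| / 2) := by ring
              _ ≤ 2 * (β * |θ| * u x) := by linarith [h3]
              _ = |θ| * (2 * β * u x) := by ring
          exact le_of_mul_le_mul_left h7 hθ
        have h8 : (1:ℝ) ≤ (2 * β * u x) * (2 * β * u x) := by nlinarith [h6]
        have h9 : 4 * β ^ 2 * u x ^ 2 ≤ 4 * β ^ 2 * D x :=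
          mul_le_mul_of_nonneg_left (hP4 x) (by positivity)
        nlinarith [h8, h9]
      · rw [Set.indicator_of_notMem hx]
        positivity
    have h := integral_mono ((integrable_const (1:ℝ)).indicator hS.compl)
      (hDint.const_mul (4 * β ^ 2)) hind
    rwa [integral_indicator_const (1:ℝ) hS.compl, smul_eq_mul, mul_one,
      integral_const_mul, hDval] at h
  have hcompl : (μ S).toReal + (μ Sᶜ).toReal = 1 := by
    have h := measure_add_measure_compl (μ := μ) hS
    have h2 := congrArg ENNReal.toReal h
    rwa [ENNReal.toReal_add (measure_ne_top μ S) (measure_ne_top μ Sᶜ),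
      measure_univ, ENNReal.toReal_one] at h2
  have hfull : ∫ x, (|x| ^ t - m) ^ 2 ∂μ ≤ t ^ 2 * β ^ 2 * m ^ 2 * K := by
    calc ∫ x, (|x| ^ t - m) ^ 2 ∂μ
        ≤ ∫ x, t ^ 2 * β ^ 2 * m ^ 2 * D x ∂μ :=
          integral_mono hVint (hDint.const_mul _) hP3
      _ = t ^ 2 * β ^ 2 * m ^ 2 * K := by rw [integral_const_mul, hDval]
  have hset : ∫ x in S, (|x| ^ t - m) ^ 2 ∂μ ≤ ∫ x, (|x| ^ t - m) ^ 2 ∂μ :=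
    setIntegral_le_integral hVint (ae_of_all _ fun x => sq_nonneg _)
  -- final assembly
  have h2t : |θ| ^ (2 * t) = m ^ 2 := rpow_two_mul_eq (abs_nonneg θ) ht0
  rw [h2t]
  have hms : m ^ 2 * (μ S).toReal + m ^ 2 * (μ Sᶜ).toReal = m ^ 2 := by
    rw [← mul_add, hcompl, mul_one]
  have hY : m ^ 2 * (μ Sᶜ).toReal ≤ m ^ 2 * (4 * β ^ 2 * K) :=
    mul_le_mul_of_nonneg_left hμSc (sq_nonneg m)
  have hβK : β ^ 2 * K * (t ^ 2 + 4) ≤ ε / 2 := by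
    have h1 : β ^ 2 * K * (t ^ 2 + 4) ≤ β ^ 2 * C * (t ^ 2 + 4) := by
      apply mul_le_mul_of_nonneg_right (mul_le_mul_of_nonneg_left hKC (sq_nonneg β))
      positivity
    calc β ^ 2 * K * (t ^ 2 + 4) ≤ β ^ 2 * C * (t ^ 2 + 4) := h1
      _ = β ^ 2 * ((4 + t ^ 2) * C) := by ring
      _ ≤ ε / 2 := hβsq
  have hfin : m ^ 2 * (β ^ 2 * K * (t ^ 2 + 4)) ≤ m ^ 2 * (ε / 2) :=
    mul_le_mul_of_nonneg_left hβK (sq_nonneg m)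
  have hA : ∫ x in S, (|x| ^ t - m) ^ 2 ∂μ ≤ t ^ 2 * β ^ 2 * m ^ 2 * K := hset.trans hfull
  have e1 : I2 - I1 ^ 2 ≤ I2 - 2 * m * I1 + m ^ 2 := by nlinarith [sq_nonneg (I1 - m)]
  have e2 : I2 - 2 * m * I1 + m ^ 2
      = (∫ x in S, (|x| ^ t - m) ^ 2 ∂μ) + m ^ 2 * (μ Sᶜ).toReal := by
    linarith [hsplit, hms]
  have e3 : (∫ x in S, (|x| ^ t - m) ^ 2 ∂μ) + m ^ 2 * (μ Sᶜ).toReal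
      ≤ t ^ 2 * β ^ 2 * m ^ 2 * K + m ^ 2 * (4 * β ^ 2 * K) := add_le_add hA hY
  have e4 : t ^ 2 * β ^ 2 * m ^ 2 * K + m ^ 2 * (4 * β ^ 2 * K)
      = m ^ 2 * (β ^ 2 * K * (t ^ 2 + 4)) := by ring
  have e5 : m ^ 2 * (ε / 2) ≤ m ^ 2 * ε :=
    mul_le_mul_of_nonneg_left (by linarith) (sq_nonneg m)
  linarith [e1, e2, e3, e4, hfin, e5]
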